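/- Let E be a connected directed graph and A = KE its path algebra over a field K. If E is a cycle C_n, then the centroid C(A) is isomorphic to the polynomial algebra K[x]; otherwise C(A) = K·Id_A. -/

import Mathlib

/-- A directed graph: vertices, edges, source and range maps. -/
structure DGraph : Type 1 where
  V : Type
  Edge : Type
  s : Edge → V
  r : Edge → V

namespace DGraph

/-- A list of edges is composable if consecutive edges match up. -/
def IsComposable (G : DGraph) (l : List G.Edge) : Prop :=
  l.Chain' (fun e f => G.r e = G.s f)

/-- A path in `G`: either a trivial path at a vertex, or a nonempty composable list of edges. -/
def GPath (G : DGraph) : Type :=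
  G.V ⊕ {l : List G.Edge // l ≠ [] ∧ G.IsComposable l}

namespace GPath

variable {G : DGraph}

/-- The source of a path. -/
def src : GPath G → G.V
  | Sum.inl v => v
  | Sum.inr l => G.s (l.1.head l.2.1)

/-- The range of a path. -/
def rng : GPath G → G.V
  | Sum.inl v => v
  | Sum.inr l => G.r (l.1.getLast l.2.1)

/-- The length of a path. -/
def length : GPath G → ℕ
  | Sum.inl _ => 0
  | Sum.inr l => l.1.length

/-- The trivial path at a vertex. -/
def ofVertex (v : G.V) : GPath G := Sum.inl v

/-- The length-one path given by an edge. -/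
def ofEdge (e : G.Edge) : GPath G :=
  Sum.inr ⟨[e], by refine ⟨by simp, ?_⟩; exact List.isChain_singleton _⟩

/-- Concatenation of composable paths. -/
def comp : (p q : GPath G) → p.rng = q.src → GPath G
  | Sum.inl _, q, _ => q
  | Sum.inr l, Sum.inl _, _ => Sum.inr l
  | Sum.inr l, Sum.inr m, h => Sum.inr ⟨l.1 ++ m.1, by
      refine ⟨by simp [l.2.1], l.2.2.append m.2.2 ?_⟩
      intro x hx y hy
      rw [List.getLast?_eq_some_getLast l.2.1] at hx
      rw [List.head?_eq_head m.2.1] at hy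
      cases hx
      cases hy
      exact h⟩

end GPath

end DGraph

open DGraph

/-- A realization of the path algebra of the graph `G` over the field `K`:
a `K`-algebra with a basis indexed by the paths of `G`, multiplying by concatenation. -/
structure PathAlgebraOn (K : Type) [Field K] (G : DGraph) (A : Type)
    [NonUnitalRing A] [Module K A] where
  basis : Module.Basis (GPath G) K A
  mul_comp : ∀ (p q : GPath G) (h : p.rng = q.src),
      basis p * basis q = basis (p.comp q h)
  mul_ncomp : ∀ p q : GPath G, p.rng ≠ q.src → basis p * basis q = 0

/-- Adjacency in the underlying undirected graph. -/
def DGraph.Adj (G : DGraph) (u v : G.V) : Prop :=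
  ∃ e : G.Edge, (G.s e = u ∧ G.r e = v) ∨ (G.s e = v ∧ G.r e = u)

/-- A graph is connected if its underlying undirected graph is connected. -/
def DGraph.Connected (G : DGraph) : Prop :=
  ∀ u v : G.V, Relation.ReflTransGen G.Adj u v

/-- `G` is (isomorphic to) the cycle graph `Cₙ` for some `n ≥ 1`. -/
def DGraph.IsCycleGraph (G : DGraph) : Prop :=
  ∃ (n : ℕ) (hn : 0 < n) (φV : G.V ≃ Fin n) (φE : G.Edge ≃ Fin n),
    (∀ e : G.Edge, φV (G.s e) = φE e) ∧
    (∀ e : G.Edge, φV (G.r e) = ⟨((φE e : ℕ) + 1) % n, Nat.mod_lt _ hn⟩)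

/-- The centroid of `A`: the `K`-linear maps `T` with `T(xy) = T(x)y = xT(y)`. -/
def centroidSet (K : Type) [Field K] (A : Type) [NonUnitalRing A] [Module K A] :
    Set (A →ₗ[K] A) :=
  {T | ∀ x y : A, T (x * y) = T x * y ∧ T (x * y) = x * T y}

open Module

namespace DGraph
namespace GPath

variable {G : DGraph}

lemma src_ofVertex (v : G.V) : (ofVertex v).src = v := rfl
lemma rng_ofVertex (v : G.V) : (ofVertex v).rng = v := rfl
lemma src_ofEdge (e : G.Edge) : (ofEdge e).src = G.s e := rfl
lemma rng_ofEdge (e : G.Edge) : (ofEdge e).rng = G.r e := rfl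
lemma length_ofVertex (v : G.V) : (ofVertex v).length = 0 := rfl
lemma length_ofEdge (e : G.Edge) : (ofEdge e).length = 1 := rfl

lemma src_comp (p q : GPath G) (h : p.rng = q.src) : (p.comp q h).src = p.src := by
  cases p with
  | inl v => simp only [comp]; exact h.symm
  | inr l =>
    cases q with
    | inl w => rfl
    | inr m =>
      show G.s ((l.1 ++ m.1).head _) = G.s (l.1.head l.2.1)
      congr 1
      exact List.head_append_of_ne_nil _

lemma rng_comp (p q : GPath G) (h : p.rng = q.src) : (p.comp q h).rng = q.rng := by
  cases p with
  | inl v => rfl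
  | inr l =>
    cases q with
    | inl w => exact h
    | inr m =>
      show G.r ((l.1 ++ m.1).getLast _) = G.r (m.1.getLast m.2.1)
      congr 1
      exact List.getLast_append_of_ne_nil _ m.2.1

lemma length_comp (p q : GPath G) (h : p.rng = q.src) :
    (p.comp q h).length = p.length + q.length := by
  cases p with
  | inl v => simp [comp, length]
  | inr l =>
    cases q with
    | inl w => simp [comp, length]
    | inr m => simp [comp, length]

lemma comp_ofVertex (p : GPath G) (h : p.rng = (ofVertex p.rng).src) :
    p.comp (ofVertex p.rng) h = p := by
  cases p with
  | inl v => rfl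
  | inr l => rfl

lemma comp_inj_left {p p' q : GPath G} (h : p.rng = q.src) (h' : p'.rng = q.src)
    (heq : p.comp q h = p'.comp q h') : p = p' := by
  cases p with
  | inl v =>
    cases p' with
    | inl v' =>
      have h1 : v = q.src := h
      have h2 : v' = q.src := h'
      simp_all; rfl
    | inr l' =>
      exfalso
      cases q with
      | inl w => simp [comp] at heq
      | inr m =>
        have heq := Subtype.ext_iff.mp (Sum.inr.inj heq)
        have := congrArg List.length heq
        simp at this
        exact l'.2.1 (this.symm.symm)
  | inr l =>
    cases p' with
    | inl v' =>
      exfalso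
      cases q with
      | inl w => simp [comp] at heq
      | inr m =>
        have heq := Subtype.ext_iff.mp (Sum.inr.inj heq)
        have := congrArg List.length heq
        simp at this
        exact l.2.1 (this)
    | inr l' =>
      cases q with
      | inl w =>
        exact heq
      | inr m =>
        have heq := Subtype.ext_iff.mp (Sum.inr.inj heq)
        congr 1
        exact Subtype.ext (List.append_cancel_right heq)

lemma comp_inj_right {p q q' : GPath G} (h : p.rng = q.src) (h' : p.rng = q'.src)
    (heq : p.comp q h = p.comp q' h') : q = q' := by
  cases p with
  | inl v => exact heq
  | inr l =>
    cases q with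
    | inl w =>
      cases q' with
      | inl w' =>
        exact congrArg Sum.inl (h.symm.trans h')
      | inr m' =>
        exfalso
        have heq := Subtype.ext_iff.mp (Sum.inr.inj heq)
        have := congrArg List.length heq
        simp at this
        exact m'.2.1 (this)
    | inr m =>
      cases q' with
      | inl w' =>
        exfalso
        have heq := Subtype.ext_iff.mp (Sum.inr.inj heq)
        have := congrArg List.length heq
        simp at this
        exact m.2.1 (this)
      | inr m' =>
        have heq := Subtype.ext_iff.mp (Sum.inr.inj heq)
        congr 1
        exact Subtype.ext (List.append_cancel_left heq)

end GPath
end DGraph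

open scoped Classical
set_option linter.unusedSectionVars false
open DGraph GPath

namespace PathAlgebraOn

variable {K : Type} [Field K] {G : DGraph} {A : Type}
  [NonUnitalRing A] [Module K A] [SMulCommClass K A A] [IsScalarTower K A A]
  (PA : PathAlgebraOn K G A)

/-- b_u * b_p = b_p when src p = u -/
lemma vertex_mul (p : GPath G) : PA.basis (ofVertex p.src) * PA.basis p = PA.basis p := by
  rw [PA.mul_comp (ofVertex p.src) p rfl]
  rfl

lemma mul_vertex (p : GPath G) : PA.basis p * PA.basis (ofVertex p.rng) = PA.basis p := by
  rw [PA.mul_comp p (ofVertex p.rng) rfl, comp_ofVertex p rfl]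

/-- coefficient of b_u * x -/
lemma repr_vertexmul (u : G.V) (x : A) (q : GPath G) :
    PA.basis.repr (PA.basis (ofVertex u) * x) q
      = if q.src = u then PA.basis.repr x q else 0 := by
  have key : (Finsupp.lapply q ∘ₗ (PA.basis.repr : A →ₗ[K] (GPath G →₀ K))
        ∘ₗ LinearMap.mulLeft K (PA.basis (ofVertex u)))
      = (if q.src = u then (1:K) else 0) •
        (Finsupp.lapply q ∘ₗ (PA.basis.repr : A →ₗ[K] (GPath G →₀ K))) := by
    apply PA.basis.ext
    intro p
    simp only [LinearMap.comp_apply, LinearMap.mulLeft_apply, LinearMap.smul_apply,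
      Finsupp.lapply_apply, Basis.repr_self, LinearEquiv.coe_coe]
    by_cases hp : p.src = u
    · subst hp
      rw [PA.vertex_mul, Basis.repr_self]
      rcases eq_or_ne q p with hq | hq
      · subst hq; simp
      · rw [Finsupp.single_eq_of_ne' (Ne.symm hq)]; simp
    · rw [PA.mul_ncomp (ofVertex u) p (by exact fun h => hp h.symm)]
      rcases eq_or_ne q p with hq | hq
      · subst hq; simp [hp]
      · rw [Finsupp.single_eq_of_ne' (Ne.symm hq)]; simp
  have := LinearMap.congr_fun key x
  simp only [LinearMap.comp_apply, LinearMap.mulLeft_apply, LinearMap.smul_apply,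
    Finsupp.lapply_apply, LinearEquiv.coe_coe, smul_eq_mul] at this
  rw [this]
  by_cases hq : q.src = u <;> simp [hq]

lemma repr_mulvertex (u : G.V) (x : A) (q : GPath G) :
    PA.basis.repr (x * PA.basis (ofVertex u)) q
      = if q.rng = u then PA.basis.repr x q else 0 := by
  have key : (Finsupp.lapply q ∘ₗ (PA.basis.repr : A →ₗ[K] (GPath G →₀ K))
        ∘ₗ LinearMap.mulRight K (PA.basis (ofVertex u)))
      = (if q.rng = u then (1:K) else 0) •
        (Finsupp.lapply q ∘ₗ (PA.basis.repr : A →ₗ[K] (GPath G →₀ K))) := by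
    apply PA.basis.ext
    intro p
    simp only [LinearMap.comp_apply, LinearMap.mulRight_apply, LinearMap.smul_apply,
      Finsupp.lapply_apply, Basis.repr_self, LinearEquiv.coe_coe]
    by_cases hp : p.rng = u
    · subst hp
      rw [PA.mul_vertex, Basis.repr_self]
      rcases eq_or_ne q p with hq | hq
      · subst hq; simp
      · rw [Finsupp.single_eq_of_ne' (Ne.symm hq)]; simp
    · rw [PA.mul_ncomp p (ofVertex u) hp]
      rcases eq_or_ne q p with hq | hq
      · subst hq; simp [hp]
      · rw [Finsupp.single_eq_of_ne' (Ne.symm hq)]; simp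
  have := LinearMap.congr_fun key x
  simp only [LinearMap.comp_apply, LinearMap.mulRight_apply, LinearMap.smul_apply,
    Finsupp.lapply_apply, LinearEquiv.coe_coe, smul_eq_mul] at this
  rw [this]
  by_cases hq : q.rng = u <;> simp [hq]

end PathAlgebraOn

namespace PathAlgebraOn

variable {K : Type} [Field K] {G : DGraph} {A : Type}
  [NonUnitalRing A] [Module K A] [SMulCommClass K A A] [IsScalarTower K A A]
  (PA : PathAlgebraOn K G A)

lemma sum_repr (x : A) :
    x = ∑ c ∈ (PA.basis.repr x).support, (PA.basis.repr x) c • PA.basis c := by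
  conv_lhs => rw [← PA.basis.linearCombination_repr x]
  rw [Finsupp.linearCombination_apply, Finsupp.sum]

lemma repr_mul_basis (x : A) (q : GPath G) (hx : ∀ c, PA.basis.repr x c ≠ 0 → c.rng = q.src)
    (r : GPath G) :
    PA.basis.repr (x * PA.basis q) r
      = ∑ c ∈ (PA.basis.repr x).support,
          (PA.basis.repr x) c * (PA.basis.repr (PA.basis c * PA.basis q) r) := by
  conv_lhs => rw [PA.sum_repr x]
  rw [Finset.sum_mul]
  simp_rw [smul_mul_assoc]
  rw [map_sum, Finsupp.finset_sum_apply]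
  simp

lemma repr_mul_right_eq (x : A) (q c₀ : GPath G) (h₀ : c₀.rng = q.src)
    (hx : ∀ c, PA.basis.repr x c ≠ 0 → c.rng = q.src) :
    PA.basis.repr (x * PA.basis q) (c₀.comp q h₀) = PA.basis.repr x c₀ := by
  rw [PA.repr_mul_basis x q hx]
  rw [Finset.sum_eq_single c₀]
  · rw [PA.mul_comp c₀ q h₀, Basis.repr_self, Finsupp.single_eq_same, mul_one]
  · intro c hc hne
    have hcc : c.rng = q.src := hx c (Finsupp.mem_support_iff.mp hc)
    rw [PA.mul_comp c q hcc, Basis.repr_self,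
      Finsupp.single_eq_of_ne' (fun h => hne (GPath.comp_inj_left hcc h₀ h)), mul_zero]
  · intro h
    rw [Finsupp.notMem_support_iff.mp h, zero_mul]

lemma repr_mul_right_ne (x : A) (q : GPath G) (r : GPath G)
    (hx : ∀ c, PA.basis.repr x c ≠ 0 → c.rng = q.src)
    (hr : ∀ (c : GPath G) (hc : c.rng = q.src), c.comp q hc ≠ r) :
    PA.basis.repr (x * PA.basis q) r = 0 := by
  rw [PA.repr_mul_basis x q hx]
  apply Finset.sum_eq_zero
  intro c hc
  have hcc : c.rng = q.src := hx c (Finsupp.mem_support_iff.mp hc)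
  rw [PA.mul_comp c q hcc, Basis.repr_self, Finsupp.single_eq_of_ne' (hr c hcc), mul_zero]

lemma repr_basis_mul (x : A) (q : GPath G) (hx : ∀ c, PA.basis.repr x c ≠ 0 → q.rng = c.src)
    (r : GPath G) :
    PA.basis.repr (PA.basis q * x) r
      = ∑ c ∈ (PA.basis.repr x).support,
          (PA.basis.repr x) c * (PA.basis.repr (PA.basis q * PA.basis c) r) := by
  conv_lhs => rw [PA.sum_repr x]
  rw [Finset.mul_sum]
  simp_rw [mul_smul_comm]
  rw [map_sum, Finsupp.finset_sum_apply]
  simp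

lemma repr_mul_left_eq (x : A) (q c₀ : GPath G) (h₀ : q.rng = c₀.src)
    (hx : ∀ c, PA.basis.repr x c ≠ 0 → q.rng = c.src) :
    PA.basis.repr (PA.basis q * x) (q.comp c₀ h₀) = PA.basis.repr x c₀ := by
  rw [PA.repr_basis_mul x q hx]
  rw [Finset.sum_eq_single c₀]
  · rw [PA.mul_comp q c₀ h₀, Basis.repr_self, Finsupp.single_eq_same, mul_one]
  · intro c hc hne
    have hcc : q.rng = c.src := hx c (Finsupp.mem_support_iff.mp hc)
    rw [PA.mul_comp q c hcc, Basis.repr_self,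
      Finsupp.single_eq_of_ne' (fun h => hne (GPath.comp_inj_right hcc h₀ h)), mul_zero]
  · intro h
    rw [Finsupp.notMem_support_iff.mp h, zero_mul]

lemma repr_mul_left_ne (x : A) (q : GPath G) (r : GPath G)
    (hx : ∀ c, PA.basis.repr x c ≠ 0 → q.rng = c.src)
    (hr : ∀ (c : GPath G) (hc : q.rng = c.src), q.comp c hc ≠ r) :
    PA.basis.repr (PA.basis q * x) r = 0 := by
  rw [PA.repr_basis_mul x q hx]
  apply Finset.sum_eq_zero
  intro c hc
  have hcc : q.rng = c.src := hx c (Finsupp.mem_support_iff.mp hc)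
  rw [PA.mul_comp q c hcc, Basis.repr_self, Finsupp.single_eq_of_ne' (hr c hcc), mul_zero]

end PathAlgebraOn

namespace PathAlgebraOn

variable {K : Type} [Field K] {G : DGraph} {A : Type}
  [NonUnitalRing A] [Module K A] [SMulCommClass K A A] [IsScalarTower K A A]
  (PA : PathAlgebraOn K G A)

section Centroid

variable {T : A →ₗ[K] A} (hT : T ∈ centroidSet K A)
include hT

lemma T_basis (p : GPath G) :
    T (PA.basis p) = T (PA.basis (ofVertex p.src)) * PA.basis p := by
  conv_lhs => rw [← PA.vertex_mul p]
  exact (hT _ _).1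

lemma supp_closed (u : G.V) (q : GPath G) (h : PA.basis.repr (T (PA.basis (ofVertex u))) q ≠ 0) :
    q.src = u ∧ q.rng = u := by
  have h1 : T (PA.basis (ofVertex u)) = PA.basis (ofVertex u) * T (PA.basis (ofVertex u)) := by
    conv_lhs => rw [← PA.vertex_mul (ofVertex u)]
    exact (hT _ _).2
  have h2 : T (PA.basis (ofVertex u)) = T (PA.basis (ofVertex u)) * PA.basis (ofVertex u) := by
    conv_lhs => rw [← PA.mul_vertex (ofVertex u)]
    exact (hT _ _).1
  constructor
  · by_contra hs
    apply h
    conv_lhs => rw [h1]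
    rw [PA.repr_vertexmul, if_neg hs]
  · by_contra hs
    apply h
    conv_lhs => rw [h2]
    rw [PA.repr_mulvertex, if_neg hs]

/-- `T` acts as the scalar `k` at the vertex `u`. -/
def IsScalK (T : A →ₗ[K] A) (u : G.V) (k : K) : Prop :=
  T (PA.basis (ofVertex u)) = k • PA.basis (ofVertex u)

omit hT in
lemma scal_of_supp (u : G.V)
    (h : ∀ q : GPath G, q ≠ ofVertex u → PA.basis.repr (T (PA.basis (ofVertex u))) q = 0) :
    PA.IsScalK T u (PA.basis.repr (T (PA.basis (ofVertex u))) (ofVertex u)) := by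
  unfold IsScalK
  apply PA.basis.repr.injective
  ext q
  rcases eq_or_ne q (ofVertex u) with hq | hq
  · subst hq
    simp [Basis.repr_self]
  · rw [h q hq]
    simp only [map_smul, Basis.repr_self, Finsupp.smul_single, smul_eq_mul, mul_one]
    rw [Finsupp.single_eq_of_ne' (Ne.symm hq)]

lemma edge_rel (e : G.Edge) :
    T (PA.basis (ofVertex (G.s e))) * PA.basis (ofEdge e)
      = PA.basis (ofEdge e) * T (PA.basis (ofVertex (G.r e))) := by
  have h1 : PA.basis (ofVertex (G.s e)) * PA.basis (ofEdge e) = PA.basis (ofEdge e) :=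
    PA.vertex_mul (ofEdge e)
  have h2 : PA.basis (ofEdge e) * PA.basis (ofVertex (G.r e)) = PA.basis (ofEdge e) :=
    PA.mul_vertex (ofEdge e)
  calc T (PA.basis (ofVertex (G.s e))) * PA.basis (ofEdge e)
      = T (PA.basis (ofVertex (G.s e)) * PA.basis (ofEdge e)) := ((hT _ _).1).symm
    _ = T (PA.basis (ofEdge e)) := by rw [h1]
    _ = T (PA.basis (ofEdge e) * PA.basis (ofVertex (G.r e))) := by rw [h2]
    _ = PA.basis (ofEdge e) * T (PA.basis (ofVertex (G.r e))) := (hT _ _).2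

omit hT in
lemma vertex_mul_edge (e : G.Edge) :
    PA.basis (ofVertex (G.s e)) * PA.basis (ofEdge e) = PA.basis (ofEdge e) :=
  PA.vertex_mul (ofEdge e)

omit hT in
lemma edge_mul_vertex (e : G.Edge) :
    PA.basis (ofEdge e) * PA.basis (ofVertex (G.r e)) = PA.basis (ofEdge e) :=
  PA.mul_vertex (ofEdge e)

lemma prop_fwd (e : G.Edge) (k : K) (h : PA.IsScalK T (G.s e) k) :
    PA.IsScalK T (G.r e) k := by
  have key : PA.basis (ofEdge e) * T (PA.basis (ofVertex (G.r e)))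
      = k • PA.basis (ofEdge e) := by
    rw [← PA.edge_rel hT e, h, smul_mul_assoc, PA.vertex_mul_edge e]
  have hx : ∀ c : GPath G, PA.basis.repr (T (PA.basis (ofVertex (G.r e)))) c ≠ 0 →
      (ofEdge e).rng = c.src := by
    intro c hc
    exact ((PA.supp_closed hT (G.r e) c hc).1).symm
  have hsupp : ∀ q : GPath G, q ≠ ofVertex (G.r e) →
      PA.basis.repr (T (PA.basis (ofVertex (G.r e)))) q = 0 := by
    intro q hq
    by_cases hcl : q.src = G.r e ∧ q.rng = G.r e
    · have hc : (ofEdge e).rng = q.src := hcl.1.symm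
      have h2 := PA.repr_mul_left_eq (T (PA.basis (ofVertex (G.r e)))) (ofEdge e) q hc hx
      rw [key] at h2
      rw [← h2]
      simp only [map_smul, Basis.repr_self, Finsupp.smul_single, smul_eq_mul, mul_one]
      apply Finsupp.single_eq_of_ne'
      cases q with
      | inl w => exact absurd (congrArg Sum.inl hcl.1) hq
      | inr l =>
        intro hcon
        have hlen := congrArg GPath.length hcon
        rw [GPath.length_comp _ _ hc] at hlen
        have hl : GPath.length (Sum.inr l : GPath G) = 0 := by omega
        exact l.2.1 (List.length_eq_zero_iff.mp hl)
    · by_contra hne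
      exact hcl (PA.supp_closed hT (G.r e) q hne)
  have hscal := PA.scal_of_supp (T := T) (G.r e) hsupp
  have hval := PA.repr_mul_left_eq (T (PA.basis (ofVertex (G.r e)))) (ofEdge e)
      (ofVertex (G.r e)) rfl hx
  rw [key] at hval
  have hcv : ((ofEdge e).comp (ofVertex (G.r e)) rfl) = ofEdge e := rfl
  rw [hcv] at hval
  have hk : PA.basis.repr (T (PA.basis (ofVertex (G.r e)))) (ofVertex (G.r e)) = k := by
    rw [← hval]
    simp [Basis.repr_self]
  rw [hk] at hscal
  exact hscal

lemma prop_bwd (e : G.Edge) (k : K) (h : PA.IsScalK T (G.r e) k) :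
    PA.IsScalK T (G.s e) k := by
  have key : T (PA.basis (ofVertex (G.s e))) * PA.basis (ofEdge e)
      = k • PA.basis (ofEdge e) := by
    rw [PA.edge_rel hT e, h, mul_smul_comm, PA.edge_mul_vertex e]
  have hx : ∀ c : GPath G, PA.basis.repr (T (PA.basis (ofVertex (G.s e)))) c ≠ 0 →
      c.rng = (ofEdge e).src := by
    intro c hc
    exact (PA.supp_closed hT (G.s e) c hc).2
  have hsupp : ∀ q : GPath G, q ≠ ofVertex (G.s e) →
      PA.basis.repr (T (PA.basis (ofVertex (G.s e)))) q = 0 := by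
    intro q hq
    by_cases hcl : q.src = G.s e ∧ q.rng = G.s e
    · have hc : q.rng = (ofEdge e).src := hcl.2
      have h2 := PA.repr_mul_right_eq (T (PA.basis (ofVertex (G.s e)))) (ofEdge e) q hc hx
      rw [key] at h2
      rw [← h2]
      simp only [map_smul, Basis.repr_self, Finsupp.smul_single, smul_eq_mul, mul_one]
      apply Finsupp.single_eq_of_ne'
      cases q with
      | inl w => exact absurd (congrArg Sum.inl hcl.1) hq
      | inr l =>
        intro hcon
        have hlen := congrArg GPath.length hcon
        rw [GPath.length_comp _ _ hc] at hlen
        have hl : GPath.length (Sum.inr l : GPath G) = 0 := by omega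
        exact l.2.1 (List.length_eq_zero_iff.mp hl)
    · by_contra hne
      exact hcl (PA.supp_closed hT (G.s e) q hne)
  have hscal := PA.scal_of_supp (T := T) (G.s e) hsupp
  have hval := PA.repr_mul_right_eq (T (PA.basis (ofVertex (G.s e)))) (ofEdge e)
      (ofVertex (G.s e)) rfl hx
  rw [key] at hval
  have hcv : ((ofVertex (G.s e)).comp (ofEdge e) rfl) = ofEdge e := rfl
  rw [hcv] at hval
  have hk : PA.basis.repr (T (PA.basis (ofVertex (G.s e)))) (ofVertex (G.s e)) = k := by
    rw [← hval]
    simp [Basis.repr_self]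
  rw [hk] at hscal
  exact hscal

lemma prop_adj {u v : G.V} (k : K) (huv : G.Adj u v) (h : PA.IsScalK T u k) :
    PA.IsScalK T v k := by
  obtain ⟨e, he | he⟩ := huv
  · obtain ⟨h1, h2⟩ := he
    subst h1; subst h2
    exact PA.prop_fwd hT e k h
  · obtain ⟨h1, h2⟩ := he
    subst h1; subst h2
    exact PA.prop_bwd hT e k h

lemma T_eq_smul_id (hconn : G.Connected) (u₀ : G.V) (k : K) (h : PA.IsScalK T u₀ k) :
    T = k • (LinearMap.id : A →ₗ[K] A) := by
  have hall : ∀ v : G.V, PA.IsScalK T v k := by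
    intro v
    induction hconn u₀ v with
    | refl => exact h
    | tail _ hadj ih => exact PA.prop_adj hT k hadj ih
  apply PA.basis.ext
  intro p
  rw [PA.T_basis hT p, hall p.src, smul_mul_assoc, PA.vertex_mul p]
  simp

end Centroid
end PathAlgebraOn

namespace PathAlgebraOn

variable {K : Type} [Field K] {G : DGraph} {A : Type}
  [NonUnitalRing A] [Module K A] [SMulCommClass K A A] [IsScalarTower K A A]
  (PA : PathAlgebraOn K G A)

section Centroid

variable {T : A →ₗ[K] A} (hT : T ∈ centroidSet K A)
include hT

/-- If there is no nontrivial closed path at `u`, then `T` is scalar at `u`. -/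
lemma scal_of_no_closed (u : G.V)
    (h : ∀ (l : {l : List G.Edge // l ≠ [] ∧ G.IsComposable l}),
      GPath.src (Sum.inr l) = u → GPath.rng (Sum.inr l) = u → False) :
    ∃ k : K, PA.IsScalK T u k := by
  refine ⟨_, PA.scal_of_supp (T := T) u ?_⟩
  intro q hq
  by_contra hne
  obtain ⟨h1, h2⟩ := PA.supp_closed hT u q hne
  cases q with
  | inl w => exact hq (congrArg Sum.inl h1)
  | inr l => exact h l h1 h2

/-- A nontrivial closed path at `u` with nonzero coefficient must begin with each
outgoing edge of `u`. -/
lemma head_eq_of_coeff (u : G.V) (e : G.Edge) (he : G.s e = u)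
    (l : {l : List G.Edge // l ≠ [] ∧ G.IsComposable l})
    (h1 : GPath.src (Sum.inr l) = u) (h2 : GPath.rng (Sum.inr l) = u)
    (hne : PA.basis.repr (T (PA.basis (ofVertex u))) (Sum.inr l) ≠ 0) :
    l.1.head l.2.1 = e := by
  by_contra hhead
  set q : GPath G := Sum.inr l with hqdef
  have hc : q.rng = (ofEdge e).src := by rw [GPath.src_ofEdge, he]; exact h2
  have hx : ∀ c : GPath G, PA.basis.repr (T (PA.basis (ofVertex u))) c ≠ 0 →
      c.rng = (ofEdge e).src := by
    intro c hcne
    rw [GPath.src_ofEdge, he]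
    exact (PA.supp_closed hT u c hcne).2
  have hval := PA.repr_mul_right_eq (T (PA.basis (ofVertex u))) (ofEdge e) q hc hx
  have hrel : T (PA.basis (ofVertex u)) * PA.basis (ofEdge e)
      = PA.basis (ofEdge e) * T (PA.basis (ofVertex (G.r e))) := by
    have := PA.edge_rel hT e
    rw [he] at this
    exact this
  rw [hrel] at hval
  have hx' : ∀ c : GPath G, PA.basis.repr (T (PA.basis (ofVertex (G.r e)))) c ≠ 0 →
      (ofEdge e).rng = c.src := by
    intro c hcne
    exact ((PA.supp_closed hT (G.r e) c hcne).1).symm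
  rw [PA.repr_mul_left_ne (T (PA.basis (ofVertex (G.r e)))) (ofEdge e) (q.comp (ofEdge e) hc)
    hx' ?_] at hval
  · exact hne hval.symm
  · -- no path of the form e·c equals l·e, since head l ≠ e
    intro c hcc hcon
    cases c with
    | inl w =>
      -- comp (ofEdge e) (inl w) = ofEdge e, but l·e has length ≥ 2
      have hlen := congrArg GPath.length hcon
      rw [GPath.length_comp _ _ hcc, GPath.length_comp] at hlen
      simp only [GPath.length_ofEdge] at hlen
      have : GPath.length (Sum.inl w : GPath G) = 0 := rfl
      have hl0 : GPath.length q = 0 := by omega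
      exact l.2.1 (List.length_eq_zero_iff.mp hl0)
    | inr m =>
      -- e :: m = l ++ [e]
      have hlist : [e] ++ m.1 = l.1 ++ [e] := Subtype.ext_iff.mp (Sum.inr.inj hcon)
      have hL : (l.1 ++ [e]).head (by simp) = l.1.head l.2.1 :=
        List.head_append_of_ne_nil l.2.1
      have h3 : (([e] ++ m.1).head (by simp) : G.Edge) = (l.1 ++ [e]).head (by simp) := by
        have := congrArg List.head? hlist
        rw [List.head?_eq_head (by simp), List.head?_eq_head (by simp)] at this
        exact Option.some.inj this
      have hR : (([e] ++ m.1).head (by simp) : G.Edge) = e := rfl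
      exact hhead (hL ▸ h3 ▸ hR)

/-- A nontrivial closed path at `u` with nonzero coefficient must end with each
incoming edge of `u`. -/
lemma last_eq_of_coeff (u : G.V) (e : G.Edge) (he : G.r e = u)
    (l : {l : List G.Edge // l ≠ [] ∧ G.IsComposable l})
    (h1 : GPath.src (Sum.inr l) = u) (h2 : GPath.rng (Sum.inr l) = u)
    (hne : PA.basis.repr (T (PA.basis (ofVertex u))) (Sum.inr l) ≠ 0) :
    l.1.getLast l.2.1 = e := by
  by_contra hlast
  set q : GPath G := Sum.inr l with hqdef
  have hc : (ofEdge e).rng = q.src := by rw [GPath.rng_ofEdge, he]; exact h1.symm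
  have hx : ∀ c : GPath G, PA.basis.repr (T (PA.basis (ofVertex u))) c ≠ 0 →
      (ofEdge e).rng = c.src := by
    intro c hcne
    rw [GPath.rng_ofEdge, he]
    exact ((PA.supp_closed hT u c hcne).1).symm
  have hval := PA.repr_mul_left_eq (T (PA.basis (ofVertex u))) (ofEdge e) q hc hx
  have hrel : PA.basis (ofEdge e) * T (PA.basis (ofVertex u))
      = T (PA.basis (ofVertex (G.s e))) * PA.basis (ofEdge e) := by
    have := PA.edge_rel hT e
    rw [he] at this
    exact this.symm
  rw [hrel] at hval
  have hx' : ∀ c : GPath G, PA.basis.repr (T (PA.basis (ofVertex (G.s e)))) c ≠ 0 →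
      c.rng = (ofEdge e).src := by
    intro c hcne
    exact (PA.supp_closed hT (G.s e) c hcne).2
  rw [PA.repr_mul_right_ne (T (PA.basis (ofVertex (G.s e)))) (ofEdge e)
    ((ofEdge e).comp q hc) hx' ?_] at hval
  · exact hne hval.symm
  · intro c hcc hcon
    cases c with
    | inl w =>
      have hlen := congrArg GPath.length hcon
      rw [GPath.length_comp _ _ hcc, GPath.length_comp] at hlen
      simp only [GPath.length_ofEdge] at hlen
      have : GPath.length (Sum.inl w : GPath G) = 0 := rfl
      have hl0 : GPath.length q = 0 := by omega
      exact l.2.1 (List.length_eq_zero_iff.mp hl0)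
    | inr m =>
      -- m ++ [e] = [e] ++ l
      have hlist : m.1 ++ [e] = [e] ++ l.1 := Subtype.ext_iff.mp (Sum.inr.inj hcon)
      have h1' : (m.1 ++ [e]).getLast? = some e := by simp
      rw [hlist] at h1'
      have h2' : ([e] ++ l.1).getLast? = some (l.1.getLast l.2.1) := by
        rw [List.getLast?_append_of_ne_nil _ l.2.1, List.getLast?_eq_getLast l.2.1]
      rw [h2'] at h1'
      exact hlast (Option.some.inj h1')

lemma scal_of_two_out (e₁ e₂ : G.Edge) (hs : G.s e₁ = G.s e₂) (hne : e₁ ≠ e₂) :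
    ∃ k : K, PA.IsScalK T (G.s e₁) k := by
  refine ⟨_, PA.scal_of_supp (T := T) (G.s e₁) ?_⟩
  intro q hq
  by_contra hne0
  obtain ⟨h1, h2⟩ := PA.supp_closed hT (G.s e₁) q hne0
  cases q with
  | inl w => exact hq (congrArg Sum.inl h1)
  | inr l =>
    have k1 := PA.head_eq_of_coeff hT (G.s e₁) e₁ rfl l h1 h2 hne0
    have k2 := PA.head_eq_of_coeff hT (G.s e₁) e₂ hs.symm l h1 h2 hne0
    exact hne (k1.symm.trans k2)

lemma scal_of_two_in (e₁ e₂ : G.Edge) (hs : G.r e₁ = G.r e₂) (hne : e₁ ≠ e₂) :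
    ∃ k : K, PA.IsScalK T (G.r e₁) k := by
  refine ⟨_, PA.scal_of_supp (T := T) (G.r e₁) ?_⟩
  intro q hq
  by_contra hne0
  obtain ⟨h1, h2⟩ := PA.supp_closed hT (G.r e₁) q hne0
  cases q with
  | inl w => exact hq (congrArg Sum.inl h1)
  | inr l =>
    have k1 := PA.last_eq_of_coeff hT (G.r e₁) e₁ rfl l h1 h2 hne0
    have k2 := PA.last_eq_of_coeff hT (G.r e₁) e₂ hs.symm l h1 h2 hne0
    exact hne (k1.symm.trans k2)

end Centroid
end PathAlgebraOn

namespace DGraph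

variable {G : DGraph}

/-- There is a nontrivial closed path at `v`. -/
def HasClosed (G : DGraph) (v : G.V) : Prop :=
  ∃ (l : List G.Edge) (hl : l ≠ []), G.IsComposable l ∧
    G.s (l.head hl) = v ∧ G.r (l.getLast hl) = v

lemma rot_fwd (hout1 : ∀ e₁ e₂ : G.Edge, G.s e₁ = G.s e₂ → e₁ = e₂)
    {v : G.V} (hCv : G.HasClosed v) (e : G.Edge) (he : G.s e = v) :
    G.HasClosed (G.r e) := by
  obtain ⟨l, hl, hcomp, hs, hr⟩ := hCv
  obtain ⟨a, t, rfl⟩ := List.exists_cons_of_ne_nil hl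
  have hch : List.Chain' (fun e f => G.r e = G.s f) (a :: t) := hcomp
  have hae : a = e := by
    apply hout1
    rw [he]
    simpa using hs
  subst hae
  rcases eq_or_ne t [] with rfl | ht
  · refine ⟨[a], by simp, hcomp, ?_, by simp⟩
    simp only [List.head_cons]
    simp at hr
    rw [hr]
    simpa using hs
  · refine ⟨t ++ [a], by simp, ?_, ?_, ?_⟩
    · show List.Chain' (fun e f => G.r e = G.s f) (t ++ [a])
      rw [List.Chain', List.isChain_append]
      refine ⟨(List.isChain_cons.mp hch).2, List.isChain_singleton a, ?_⟩
      intro x hx y hy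
      simp only [List.head?_cons, Option.mem_def, Option.some.injEq] at hy
      subst hy
      rw [List.getLast?_eq_getLast ht, Option.mem_def, Option.some.injEq] at hx
      subst hx
      have h4 : (a :: t).getLast (by simp) = t.getLast ht := List.getLast_cons ht
      rw [h4] at hr
      rw [hr]
      exact he.symm
    · have h1 : (t ++ [a]).head (by simp) = t.head ht := List.head_append_of_ne_nil ht
      have h5 := (List.isChain_cons.mp hch).1 (t.head ht) (by rw [List.head?_eq_head ht]; rfl)
      rw [h1]
      exact h5.symm
    · simp

lemma rot_bwd (hin1 : ∀ e₁ e₂ : G.Edge, G.r e₁ = G.r e₂ → e₁ = e₂)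
    {v : G.V} (hCv : G.HasClosed v) (e : G.Edge) (he : G.r e = v) :
    G.HasClosed (G.s e) := by
  obtain ⟨l, hl, hcomp, hs, hr⟩ := hCv
  have hch : List.Chain' (fun e f => G.r e = G.s f) l := hcomp
  have hae : l.getLast hl = e := by
    apply hin1
    rw [he]
    exact hr
  rcases eq_or_ne l.dropLast [] with hd | hd
  · obtain ⟨a, t, rfl⟩ := List.exists_cons_of_ne_nil hl
    have ht : t = [] := by
      cases t with
      | nil => rfl
      | cons b s => simp [List.dropLast] at hd
    subst ht
    have hae' : a = e := by simpa using hae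
    subst hae'
    refine ⟨[a], by simp, hcomp, by simp, ?_⟩
    have hr' : G.r a = v := by simpa using hr
    have hs' : G.s a = v := by simpa using hs
    simp only [List.getLast_singleton]
    rw [hr', hs']
  · have hdecomp : l.dropLast ++ [l.getLast hl] = l := List.dropLast_append_getLast hl
    have hch2 : List.Chain' (fun e f => G.r e = G.s f) (l.dropLast ++ [l.getLast hl]) := by
      rw [hdecomp]; exact hch
    rw [List.Chain', List.isChain_append] at hch2
    refine ⟨e :: l.dropLast, by simp, ?_, by simp, ?_⟩
    · show List.Chain' (fun e f => G.r e = G.s f) (e :: l.dropLast)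
      rw [List.Chain', List.isChain_cons]
      constructor
      · intro y hy
        rw [List.head?_eq_head hd, Option.mem_def, Option.some.injEq] at hy
        subst hy
        have h0 : (l.dropLast ++ [l.getLast hl]).head (by simp [hd])
            = l.dropLast.head hd := List.head_append_of_ne_nil hd
        have h0' : ((l.dropLast ++ [l.getLast hl]).head (by simp [hd]) : G.Edge)
            = l.head hl := by
          have h6 : some ((l.dropLast ++ [l.getLast hl]).head (by simp [hd]))
              = some (l.head hl) := by
            rw [← List.head?_eq_head, ← List.head?_eq_head, hdecomp]
          exact Option.some.inj h6
        have h1 : l.dropLast.head hd = l.head hl := h0.symm.trans h0'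
        rw [h1, he, hs]
      · exact hch2.1
    · have h2 : (e :: l.dropLast).getLast (by simp) = l.dropLast.getLast hd :=
        List.getLast_cons hd
      rw [h2]
      have h3 := hch2.2.2 (l.dropLast.getLast hd)
        (by rw [List.getLast?_eq_getLast hd]; rfl) (l.getLast hl) (by simp)
      rw [h3, hae]

lemma hasClosed_adj (hout1 : ∀ e₁ e₂ : G.Edge, G.s e₁ = G.s e₂ → e₁ = e₂)
    (hin1 : ∀ e₁ e₂ : G.Edge, G.r e₁ = G.r e₂ → e₁ = e₂)
    {v w : G.V} (hCv : G.HasClosed v) (hadj : G.Adj v w) : G.HasClosed w := by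
  obtain ⟨e, ⟨h1, h2⟩ | ⟨h1, h2⟩⟩ := hadj
  · rw [← h2]; exact rot_fwd hout1 hCv e h1
  · rw [← h1]; exact rot_bwd hin1 hCv e h2

end DGraph

namespace DGraph

variable {G : DGraph}

lemma isCycleGraph_of (hconn : G.Connected)
    (hout1 : ∀ e₁ e₂ : G.Edge, G.s e₁ = G.s e₂ → e₁ = e₂)
    (hin1 : ∀ e₁ e₂ : G.Edge, G.r e₁ = G.r e₂ → e₁ = e₂)
    {u : G.V} (hCu : G.HasClosed u) : G.IsCycleGraph := by
  classical
  -- every vertex has a nontrivial closed path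
  have hCall : ∀ v : G.V, G.HasClosed v := by
    intro v
    induction hconn u v with
    | refl => exact hCu
    | tail _ hadj ih => exact hasClosed_adj hout1 hin1 ih hadj
  have hout : ∀ v : G.V, ∃ e : G.Edge, G.s e = v := by
    intro v
    obtain ⟨l, hl, _, hs, _⟩ := hCall v
    exact ⟨l.head hl, hs⟩
  have hin : ∀ v : G.V, ∃ e : G.Edge, G.r e = v := by
    intro v
    obtain ⟨l, hl, _, _, hr⟩ := hCall v
    exact ⟨l.getLast hl, hr⟩
  set nxt : G.V → G.Edge := fun v => (hout v).choose with hnxtdef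
  have hnxt : ∀ v, G.s (nxt v) = v := fun v => (hout v).choose_spec
  set prv : G.V → G.Edge := fun v => (hin v).choose with hprvdef
  have hprv : ∀ v, G.r (prv v) = v := fun v => (hin v).choose_spec
  set σ : G.V → G.V := fun v => G.r (nxt v) with hσdef
  set τ : G.V → G.V := fun v => G.s (prv v) with hτdef
  have nxt_eq : ∀ e : G.Edge, nxt (G.s e) = e := fun e => hout1 _ _ (hnxt (G.s e))
  have prv_eq : ∀ e : G.Edge, prv (G.r e) = e := fun e => hin1 _ _ (hprv (G.r e))
  have τσ : ∀ v, τ (σ v) = v := by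
    intro v
    have h1 : prv (σ v) = nxt v := prv_eq (nxt v)
    show G.s (prv (σ v)) = v
    rw [h1, hnxt]
  have στ : ∀ v, σ (τ v) = v := by
    intro v
    have h1 : nxt (τ v) = prv v := nxt_eq (prv v)
    show G.r (nxt (τ v)) = v
    rw [h1, hprv]
  have hσinj : Function.Injective σ := Function.LeftInverse.injective τσ
  -- range of a composable list
  have rng_iter : ∀ (l : List G.Edge) (hl : l ≠ []), G.IsComposable l →
      G.r (l.getLast hl) = σ^[l.length] (G.s (l.head hl)) := by
    intro l
    induction l with
    | nil => intro hl; exact absurd rfl hl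
    | cons a t ih =>
      intro hl hcomp
      have hch : List.Chain' (fun e f => G.r e = G.s f) (a :: t) := hcomp
      cases t with
      | nil =>
        simp only [List.getLast_singleton, List.head_cons, List.length_cons,
          List.length_nil, Nat.zero_add, Function.iterate_one]
        rw [hσdef]
        simp only []
        rw [nxt_eq a]
      | cons b t' =>
        have ht : (b :: t') ≠ [] := by simp
        have h1 : (a :: b :: t').getLast hl = (b :: t').getLast ht := List.getLast_cons ht
        have hcomp' : G.IsComposable (b :: t') := (List.isChain_cons_cons.mp hch).2
        have hR : G.r a = G.s b := (List.isChain_cons_cons.mp hch).1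
        rw [h1, ih ht hcomp']
        simp only [List.head_cons, List.length_cons]
        have h2 : G.s b = σ (G.s a) := by
          rw [← hR, hσdef]
          simp only []
          rw [nxt_eq a]
        rw [h2, ← Function.iterate_succ_apply]
  -- the period at u
  obtain ⟨l₀, hl₀, hc₀, hs₀, hr₀⟩ := hCu
  have hP : ∃ k, 0 < k ∧ σ^[k] u = u := by
    refine ⟨l₀.length, List.length_pos_iff.mpr hl₀, ?_⟩
    have h := rng_iter l₀ hl₀ hc₀
    rw [hs₀, hr₀] at h
    exact h.symm
  set n : ℕ := Nat.find hP with hndef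
  have hn : 0 < n ∧ σ^[n] u = u := Nat.find_spec hP
  have hmin : ∀ k, k < n → ¬(0 < k ∧ σ^[k] u = u) := fun k hk => Nat.find_min hP hk
  -- reduction of iterates mod n
  have hmod_aux : ∀ (q r' : ℕ), σ^[n * q + r'] u = σ^[r'] u := by
    intro q
    induction q with
    | zero => intro r'; simp
    | succ q ih =>
      intro r'
      have h1 : n * (q + 1) + r' = (n * q + r') + n := by ring
      rw [h1, Function.iterate_add_apply, hn.2, ih r']
  have hmod : ∀ a : ℕ, σ^[a] u = σ^[a % n] u := by
    intro a
    conv_lhs => rw [← Nat.div_add_mod a n]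
    rw [hmod_aux (a / n) (a % n)]
  -- injectivity below n
  have hinj' : ∀ i j : ℕ, i ≤ j → j < n → σ^[i] u = σ^[j] u → i = j := by
    intro i j hij hjn heq
    by_contra hne
    have hd : 0 < j - i := by omega
    have h1 : σ^[i] (σ^[j - i] u) = σ^[i] u := by
      rw [← Function.iterate_add_apply, Nat.add_sub_cancel' hij]
      exact heq.symm
    have h2 : σ^[j - i] u = u := Function.Injective.iterate hσinj i h1
    exact hmin (j - i) (by omega) ⟨hd, h2⟩
  -- surjectivity of iteration
  have hsurj' : ∀ v : G.V, ∃ a : ℕ, σ^[a] u = v := by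
    intro v
    induction hconn u v with
    | refl => exact ⟨0, rfl⟩
    | tail _ hadj ih =>
      obtain ⟨a, ha⟩ := ih
      obtain ⟨e, ⟨h1, h2⟩ | ⟨h1, h2⟩⟩ := hadj
      · refine ⟨a + 1, ?_⟩
        rw [Function.iterate_succ_apply', ha, ← h2, ← h1, hσdef]
        simp only []
        rw [nxt_eq e]
      · -- e goes from the new vertex into the old one
        refine ⟨a + n - 1, ?_⟩
        have he : prv (G.r e) = e := prv_eq e
        have hτv : τ (σ^[a] u) = G.s e := by
          rw [ha, ← h2]
          show G.s (prv (G.r e)) = G.s e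
          rw [he]
        have h3 : σ^[a + n] u = σ^[a] u := by
          rw [Function.iterate_add_apply, hn.2]
        have h4 : a + n = (a + n - 1) + 1 := by omega
        rw [h4, Function.iterate_succ_apply'] at h3
        rw [← h1, ← hτv, ← h3, τσ]
  -- the bijection Fin n → V
  set φfun : Fin n → G.V := fun i => σ^[i.1] u with hφdef
  have hφbij : Function.Bijective φfun := by
    constructor
    · intro i j hij
      rcases le_total i.1 j.1 with h | h
      · exact Fin.ext (hinj' i.1 j.1 h j.2 hij)
      · exact (Fin.ext (hinj' j.1 i.1 h i.2 hij.symm)).symm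
    · intro v
      obtain ⟨a, ha⟩ := hsurj' v
      exact ⟨⟨a % n, Nat.mod_lt _ hn.1⟩, by rw [hφdef]; simp only []; rw [← hmod]; exact ha⟩
  have hsbij : Function.Bijective G.s := ⟨fun e₁ e₂ h => hout1 e₁ e₂ h, hout⟩
  set eV : Fin n ≃ G.V := Equiv.ofBijective φfun hφbij with heVdef
  set φV : G.V ≃ Fin n := eV.symm with hφVdef
  set φE : G.Edge ≃ Fin n := (Equiv.ofBijective G.s hsbij).trans φV with hφEdef
  have hφV_φfun : ∀ j : Fin n, φV (φfun j) = j := by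
    intro j
    rw [hφVdef]
    exact eV.symm_apply_apply j
  have hkey : ∀ v : G.V, φV (σ v) = ⟨((φV v : ℕ) + 1) % n, Nat.mod_lt _ hn.1⟩ := by
    intro v
    have hv : v = φfun (φV v) := (eV.apply_symm_apply v).symm
    have h1 : σ v = φfun ⟨((φV v : ℕ) + 1) % n, Nat.mod_lt _ hn.1⟩ := by
      conv_lhs => rw [hv]
      have hstep := Function.iterate_succ_apply' σ ((φV v : ℕ)) u
      rw [hφdef]
      simp only []
      rw [← hmod]
      exact hstep.symm
    rw [h1, hφV_φfun]
  refine ⟨n, hn.1, φV, φE, ?_, ?_⟩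
  · intro e
    rfl
  · intro e
    have h1 : G.r e = σ (G.s e) := by
      rw [hσdef]
      simp only []
      rw [nxt_eq e]
    rw [h1, hkey (G.s e)]
    rfl

end DGraph

namespace PathAlgebraOn

variable {K : Type} [Field K] {G : DGraph} {A : Type}
  [NonUnitalRing A] [Module K A] [SMulCommClass K A A] [IsScalarTower K A A]
  (PA : PathAlgebraOn K G A)

include PA in
lemma noncycle_branch (hconn : G.Connected) (hnc : ¬ G.IsCycleGraph) :
    ∀ T ∈ centroidSet K A, ∃ k : K, T = k • (LinearMap.id : A →ₗ[K] A) := by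
  intro T hT
  by_cases hV : Nonempty G.V
  · obtain ⟨u₀⟩ := hV
    have hscal : ∃ (u : G.V) (k : K), PA.IsScalK T u k := by
      by_cases h2o : ∃ e₁ e₂ : G.Edge, G.s e₁ = G.s e₂ ∧ e₁ ≠ e₂
      · obtain ⟨e₁, e₂, hs, hne⟩ := h2o
        obtain ⟨k, hk⟩ := PA.scal_of_two_out hT e₁ e₂ hs hne
        exact ⟨_, k, hk⟩
      · by_cases h2i : ∃ e₁ e₂ : G.Edge, G.r e₁ = G.r e₂ ∧ e₁ ≠ e₂
        · obtain ⟨e₁, e₂, hs, hne⟩ := h2i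
          obtain ⟨k, hk⟩ := PA.scal_of_two_in hT e₁ e₂ hs hne
          exact ⟨_, k, hk⟩
        · push_neg at h2o h2i
          have hout1 : ∀ e₁ e₂ : G.Edge, G.s e₁ = G.s e₂ → e₁ = e₂ := h2o
          have hin1 : ∀ e₁ e₂ : G.Edge, G.r e₁ = G.r e₂ → e₁ = e₂ := h2i
          by_cases hcp : ∃ v : G.V, G.HasClosed v
          · exact absurd (DGraph.isCycleGraph_of hconn hout1 hin1 hcp.choose_spec) hnc
          · push_neg at hcp
            have hno : ∀ (l : {l : List G.Edge // l ≠ [] ∧ G.IsComposable l}),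
                GPath.src (Sum.inr l) = u₀ → GPath.rng (Sum.inr l) = u₀ → False := by
              intro l h1 h2
              exact hcp u₀ ⟨l.1, l.2.1, l.2.2, h1, h2⟩
            obtain ⟨k, hk⟩ := PA.scal_of_no_closed hT u₀ hno
            exact ⟨u₀, k, hk⟩
    obtain ⟨u, k, hk⟩ := hscal
    exact ⟨k, PA.T_eq_smul_id hT hconn u k hk⟩
  · have hVe : IsEmpty G.V := not_nonempty_iff.mp hV
    have hEe : IsEmpty G.Edge := ⟨fun e => hVe.false (G.s e)⟩
    have hPe : IsEmpty (GPath G) := by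
      constructor
      rintro (v | l)
      · exact hVe.false v
      · exact hEe.false (l.1.head l.2.1)
    have hsub : ∀ x y : A, x = y := by
      intro x y
      apply PA.basis.repr.injective
      haveI := hPe
      exact Subsingleton.elim _ _
    exact ⟨0, by ext x; exact hsub _ _⟩

end PathAlgebraOn

namespace DGraph

variable {G : DGraph}

/-- The list of `m` edges following the successor structure starting at `v`. -/
def elist (nxt : G.V → G.Edge) (σ : G.V → G.V) : ℕ → G.V → List G.Edge
  | 0, _ => []
  | (m+1), v => nxt v :: elist nxt σ m (σ v)

lemma elist_length (nxt : G.V → G.Edge) (σ : G.V → G.V) (m : ℕ) (v : G.V) :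
    (elist nxt σ m v).length = m := by
  induction m generalizing v with
  | zero => rfl
  | succ k ih => simp [elist, ih]

section PathFrom

variable {nxt : G.V → G.Edge} {σ : G.V → G.V}
  (hs' : ∀ v, G.s (nxt v) = v) (hr' : ∀ v, G.r (nxt v) = σ v)

include hs' hr' in
lemma elist_chain : ∀ (m : ℕ) (v : G.V), G.IsComposable (elist nxt σ m v) := by
  intro m
  induction m with
  | zero => intro v; exact List.isChain_nil
  | succ k ih =>
    intro v
    show List.Chain' (fun e f => G.r e = G.s f) (nxt v :: elist nxt σ k (σ v))
    rw [List.Chain', List.isChain_cons]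
    refine ⟨?_, ih (σ v)⟩
    intro y hy
    cases k with
    | zero => simp [elist] at hy
    | succ j =>
      have : y = nxt (σ v) := by
        simp [elist] at hy
        exact hy.symm
      subst this
      rw [hr', hs']

variable (nxt σ) in
/-- The unique path of length `m` starting at `v`. -/
def pathFrom (v : G.V) (m : ℕ) (hc : ∀ (m : ℕ) (v : G.V), G.IsComposable (elist nxt σ m v)) :
    GPath G :=
  match m with
  | 0 => Sum.inl v
  | (k+1) => Sum.inr ⟨elist nxt σ (k+1) v, by simp [elist], hc (k+1) v⟩

variable {hc : ∀ (m : ℕ) (v : G.V), G.IsComposable (elist nxt σ m v)}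

include hs' in
lemma pathFrom_src (v : G.V) (m : ℕ) : (pathFrom nxt σ v m hc).src = v := by
  cases m with
  | zero => rfl
  | succ k =>
    show G.s ((nxt v :: elist nxt σ k (σ v)).head (by simp)) = v
    rw [List.head_cons, hs']

lemma pathFrom_length (v : G.V) (m : ℕ) : (pathFrom nxt σ v m hc).length = m := by
  cases m with
  | zero => rfl
  | succ k =>
    show (elist nxt σ (k+1) v).length = k + 1
    rw [elist_length]

include hr' in
lemma elist_last_r : ∀ (m : ℕ) (v : G.V) (h : elist nxt σ (m+1) v ≠ []),
    G.r ((elist nxt σ (m+1) v).getLast h) = σ^[m+1] v := by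
  intro m
  induction m with
  | zero =>
    intro v h
    show G.r ((nxt v :: []).getLast h) = σ v
    exact hr' v
  | succ j ih =>
    intro v h
    have hne : elist nxt σ (j+1) (σ v) ≠ [] := by simp [elist]
    have h1 : (nxt v :: elist nxt σ (j+1) (σ v)).getLast (by simp)
        = (elist nxt σ (j+1) (σ v)).getLast hne := List.getLast_cons hne
    show G.r ((nxt v :: elist nxt σ (j+1) (σ v)).getLast (by simp)) = σ^[j+2] v
    rw [h1, ih (σ v) hne, ← Function.iterate_succ_apply]

include hr' in
lemma pathFrom_rng (v : G.V) (m : ℕ) : (pathFrom nxt σ v m hc).rng = σ^[m] v := by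
  cases m with
  | zero => rfl
  | succ k =>
    show G.r ((elist nxt σ (k+1) v).getLast (by simp [elist])) = σ^[k+1] v
    exact elist_last_r hr' k v _

include hs' in
lemma elist_of_chain (huniq : ∀ e : G.Edge, nxt (G.s e) = e) (hr' : ∀ v, G.r (nxt v) = σ v) :
    ∀ (t : List G.Edge) (ht : t ≠ []), G.IsComposable t →
      t = elist nxt σ t.length (G.s (t.head ht)) := by
  intro t
  induction t with
  | nil => intro ht; exact absurd rfl ht
  | cons a t' ih =>
    intro ht hcomp
    have hch : List.Chain' (fun e f => G.r e = G.s f) (a :: t') := hcomp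
    cases t' with
    | nil =>
      show [a] = [nxt (G.s a)]
      rw [huniq a]
    | cons b t'' =>
      have hab : G.r a = G.s b := (List.isChain_cons_cons.mp hch).1
      have hIH := ih (by simp) (List.isChain_cons_cons.mp hch).2
      show a :: b :: t'' = nxt (G.s a) :: elist nxt σ (b :: t'').length (σ (G.s a))
      rw [huniq a]
      congr 1
      have hσ : σ (G.s a) = G.s b := by rw [← hr' (G.s a), huniq a, hab]
      rw [hσ]
      simpa using hIH

include hs' in
lemma pathFrom_uniq (huniq : ∀ e : G.Edge, nxt (G.s e) = e) (hr' : ∀ v, G.r (nxt v) = σ v)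
    (p : GPath G) : p = pathFrom nxt σ p.src p.length hc := by
  cases p with
  | inl v => rfl
  | inr l =>
    obtain ⟨a, t, hat⟩ := List.exists_cons_of_ne_nil l.2.1
    have hlen : l.1.length = (l.1.length - 1) + 1 := by
      have := List.length_pos_iff.mpr l.2.1
      omega
    have := elist_of_chain hs' huniq hr' l.1 l.2.1 l.2.2
    show Sum.inr l = pathFrom nxt σ (G.s (l.1.head l.2.1)) (GPath.length (Sum.inr l)) hc
    have hlen2 : GPath.length (Sum.inr l : GPath G) = (l.1.length - 1) + 1 := hlen
    rw [hlen2]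
    show Sum.inr l = Sum.inr ⟨elist nxt σ ((l.1.length - 1) + 1) (G.s (l.1.head l.2.1)), _⟩
    congr 1
    apply Subtype.ext
    show l.1 = elist nxt σ ((l.1.length - 1) + 1) (G.s (l.1.head l.2.1))
    rw [← hlen]
    exact this

end PathFrom
end DGraph

namespace PathAlgebraOn

open DGraph GPath

variable {K : Type} [Field K] {G : DGraph} {A : Type}
  [NonUnitalRing A] [Module K A] [SMulCommClass K A A] [IsScalarTower K A A]
  (PA : PathAlgebraOn K G A)

include PA in
lemma cycle_branch (hcyc : G.IsCycleGraph) :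
    ∃ Φ : Polynomial K →ₗ[K] (A →ₗ[K] A),
      Function.Injective Φ ∧
      (∀ p q : Polynomial K, Φ (p * q) = Φ p ∘ₗ Φ q) ∧
      Φ 1 = LinearMap.id ∧
      Set.range Φ = centroidSet K A := by
  classical
  obtain ⟨n, hn, φV, φE, hsφ, hrφ⟩ := hcyc
  set nxt : G.V → G.Edge := fun v => φE.symm (φV v) with hnxtdef
  have hs' : ∀ v, G.s (nxt v) = v := by
    intro v
    apply φV.injective
    rw [hsφ]
    show φE ((fun v => φE.symm (φV v)) v) = _
    simp
  set σ : G.V → G.V := fun v => G.r (nxt v) with hσdef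
  have hr' : ∀ v, G.r (nxt v) = σ v := fun v => rfl
  have huniq : ∀ e : G.Edge, nxt (G.s e) = e := by
    intro e
    show φE.symm (φV (G.s e)) = e
    rw [hsφ e]
    exact φE.symm_apply_apply e
  have hφσ : ∀ v, φV (σ v) = ⟨((φV v : ℕ) + 1) % n, Nat.mod_lt _ hn⟩ := by
    intro v
    show φV (G.r (nxt v)) = _
    rw [hrφ (nxt v)]
    have h1 : (φE (nxt v) : ℕ) = (φV v : ℕ) := by
      rw [← hsφ (nxt v), hs' v]
    simp [h1]
  have hφiter : ∀ (m : ℕ) (v : G.V),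
      φV (σ^[m] v) = ⟨((φV v : ℕ) + m) % n, Nat.mod_lt _ hn⟩ := by
    intro m
    induction m with
    | zero =>
      intro v
      simp only [Function.iterate_zero, id_eq, Nat.add_zero]
      exact Fin.ext (Nat.mod_eq_of_lt (φV v).2).symm
    | succ k ih =>
      intro v
      rw [Function.iterate_succ_apply, ih (σ v), hφσ v]
      apply Fin.ext
      show (((φV v : ℕ) + 1) % n + k) % n = ((φV v : ℕ) + (k + 1)) % n
      rw [Nat.mod_add_mod]
      congr 1
      omega
  have hσn : ∀ v, σ^[n] v = v := by
    intro v
    apply φV.injective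
    rw [hφiter n v]
    apply Fin.ext
    show ((φV v : ℕ) + n) % n = (φV v : ℕ)
    rw [Nat.add_mod_right]
    exact Nat.mod_eq_of_lt (φV v).2
  have hσkn : ∀ (k : ℕ) (v : G.V), σ^[k * n] v = v := by
    intro k
    induction k with
    | zero => intro v; simp
    | succ j ih =>
      intro v
      rw [Nat.succ_mul, Function.iterate_add_apply, hσn, ih]
  have hc : ∀ (m : ℕ) (v : G.V), G.IsComposable (elist nxt σ m v) := elist_chain hs' hr'
  set pf : G.V → ℕ → GPath G := fun v m => pathFrom nxt σ v m hc with hpfdef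
  have pf_ext : ∀ (v v' : G.V) (m m' : ℕ), v = v' → m = m' → pf v m = pf v' m' := by
    intro v v' m m' h1 h2; rw [h1, h2]
  have hpf_src : ∀ v m, (pf v m).src = v := fun v m => pathFrom_src hs' v m
  have hpf_len : ∀ v m, (pf v m).length = m := fun v m => pathFrom_length v m
  have hpf_rng : ∀ v m, (pf v m).rng = σ^[m] v := fun v m => pathFrom_rng hr' v m
  have hpf_uniq : ∀ p : GPath G, p = pf p.src p.length :=
    fun p => pathFrom_uniq hs' huniq hr' p
  have hpf_inj : ∀ (v : G.V) (m₁ m₂ : ℕ), pf v m₁ = pf v m₂ → m₁ = m₂ := by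
    intro v m1 m2 h
    rw [← hpf_len v m1, ← hpf_len v m2, h]
  have hkn_inj : ∀ (v : G.V) (k₁ k₂ : ℕ), pf v (k₁ * n) = pf v (k₂ * n) → k₁ = k₂ := by
    intro v k1 k2 h
    have := hpf_inj v _ _ h
    exact Nat.eq_of_mul_eq_mul_right hn this
  have hrng : ∀ p : GPath G, p.rng = σ^[p.length] p.src := by
    intro p
    conv_lhs => rw [hpf_uniq p]
    rw [hpf_rng]
  -- shift operators
  set S : ℕ → (A →ₗ[K] A) :=
    fun k => PA.basis.constr K (fun p => PA.basis (pf p.src (p.length + k * n))) with hSdef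
  have hS_basis : ∀ (k : ℕ) (p : GPath G),
      S k (PA.basis p) = PA.basis (pf p.src (p.length + k * n)) := by
    intro k p
    rw [hSdef]
    exact PA.basis.constr_basis K _ p
  -- range of shifted path
  have hpf_rng' : ∀ (v : G.V) (m k : ℕ), (pf v (m + k * n)).rng = σ^[m] v := by
    intro v m k
    rw [hpf_rng, Function.iterate_add_apply, hσkn]
  have hmul_S_left : ∀ (k : ℕ) (p q : GPath G),
      S k (PA.basis p * PA.basis q) = S k (PA.basis p) * PA.basis q := by
    intro k p q
    by_cases h : p.rng = q.src
    · rw [PA.mul_comp p q h, hS_basis, hS_basis]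
      have hcomp2 : (pf p.src (p.length + k * n)).rng = q.src := by
        rw [hpf_rng', ← hrng p, h]
      rw [PA.mul_comp _ q hcomp2]
      congr 1
      calc pf (p.comp q h).src ((p.comp q h).length + k * n)
          = pf p.src (p.length + k * n + q.length) := by
            apply pf_ext
            · exact src_comp p q h
            · rw [length_comp]; omega
        _ = (pf p.src (p.length + k * n)).comp q hcomp2 := by
            rw [hpf_uniq ((pf p.src (p.length + k * n)).comp q hcomp2)]
            apply pf_ext
            · rw [src_comp, hpf_src]
            · rw [length_comp, hpf_len]
    · rw [PA.mul_ncomp p q h, map_zero, hS_basis,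
        PA.mul_ncomp _ q (show (pf p.src (p.length + k * n)).rng ≠ q.src by
          rw [hpf_rng', ← hrng p]; exact h)]
  have hmul_S_right : ∀ (k : ℕ) (p q : GPath G),
      S k (PA.basis p * PA.basis q) = PA.basis p * S k (PA.basis q) := by
    intro k p q
    by_cases h : p.rng = q.src
    · rw [PA.mul_comp p q h, hS_basis, hS_basis]
      have hcomp2 : p.rng = (pf q.src (q.length + k * n)).src := by
        rw [hpf_src]; exact h
      rw [PA.mul_comp p _ hcomp2]
      congr 1
      calc pf (p.comp q h).src ((p.comp q h).length + k * n)
          = pf p.src (p.length + (q.length + k * n)) := by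
            apply pf_ext
            · exact src_comp p q h
            · rw [length_comp]; omega
        _ = p.comp (pf q.src (q.length + k * n)) hcomp2 := by
            rw [hpf_uniq (p.comp (pf q.src (q.length + k * n)) hcomp2)]
            apply pf_ext
            · rw [src_comp]
            · rw [length_comp, hpf_len]
    · rw [PA.mul_ncomp p q h, map_zero, hS_basis,
        PA.mul_ncomp p _ (show p.rng ≠ (pf q.src (q.length + k * n)).src by
          rw [hpf_src]; exact h)]
  -- each S k lies in the centroid
  have hSmul1 : ∀ (k : ℕ) (x y : A), S k (x * y) = S k x * y := by
    intro k
    have hB : (LinearMap.mul K A).compr₂ (S k) = (LinearMap.mul K A).comp (S k) := by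
      apply PA.basis.ext
      intro p
      apply PA.basis.ext
      intro q
      simp only [LinearMap.compr₂_apply, LinearMap.mul_apply', LinearMap.comp_apply]
      exact hmul_S_left k p q
    intro x y
    have := LinearMap.congr_fun (LinearMap.congr_fun hB x) y
    simpa only [LinearMap.compr₂_apply, LinearMap.mul_apply', LinearMap.comp_apply] using this
  have hSmul2 : ∀ (k : ℕ) (x y : A), S k (x * y) = x * S k y := by
    intro k
    have hB : (LinearMap.mul K A).compr₂ (S k) = (LinearMap.mul K A).compl₂ (S k) := by
      apply PA.basis.ext
      intro p
      apply PA.basis.ext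
      intro q
      simp only [LinearMap.compr₂_apply, LinearMap.mul_apply', LinearMap.compl₂_apply]
      exact hmul_S_right k p q
    intro x y
    have := LinearMap.congr_fun (LinearMap.congr_fun hB x) y
    simpa only [LinearMap.compr₂_apply, LinearMap.mul_apply', LinearMap.compl₂_apply] using this
  have hS_add : ∀ a b : ℕ, S (a + b) = (S a).comp (S b) := by
    intro a b
    apply PA.basis.ext
    intro p
    rw [LinearMap.comp_apply, hS_basis, hS_basis, hS_basis]
    congr 1
    apply pf_ext
    · rw [hpf_src]
    · rw [hpf_len]; ring
  have hS_zero : S 0 = LinearMap.id := by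
    apply PA.basis.ext
    intro p
    rw [hS_basis]
    simp only [Nat.zero_mul, Nat.add_zero, LinearMap.id_apply]
    exact congrArg PA.basis (hpf_uniq p).symm
  set Φ : Polynomial K →ₗ[K] (A →ₗ[K] A) := (Polynomial.basisMonomials K).constr K S with hΦdef
  have hΦ_mono1 : ∀ k : ℕ, Φ (Polynomial.monomial k 1) = S k := by
    intro k
    have h1 : (Polynomial.basisMonomials K) k = Polynomial.monomial k 1 := by
      rw [Polynomial.coe_basisMonomials]
    rw [← h1, hΦdef]
    exact (Polynomial.basisMonomials K).constr_basis K S k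
  have hΦ_mono : ∀ (k : ℕ) (c : K), Φ (Polynomial.monomial k c) = c • S k := by
    intro k c
    have h1 : Polynomial.monomial k c = c • Polynomial.monomial k 1 := by
      rw [Polynomial.smul_monomial, smul_eq_mul, mul_one]
    rw [h1, map_smul, hΦ_mono1]
  have hΦ_one : Φ 1 = LinearMap.id := by
    rw [← Polynomial.monomial_zero_one, hΦ_mono1, hS_zero]
  have hΦ_mul : ∀ f g : Polynomial K, Φ (f * g) = Φ f ∘ₗ Φ g := by
    intro f g
    induction f using Polynomial.induction_on' with
    | add p q hp hq => rw [add_mul, map_add, map_add, hp, hq, LinearMap.add_comp]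
    | monomial a c =>
      induction g using Polynomial.induction_on' with
      | add p q hp hq => rw [mul_add, map_add, map_add, hp, hq, LinearMap.comp_add]
      | monomial b d =>
        rw [Polynomial.monomial_mul_monomial, hΦ_mono, hΦ_mono, hΦ_mono, hS_add]
        rw [LinearMap.smul_comp, LinearMap.comp_smul, smul_smul]
  have hΦ_apply : ∀ (f : Polynomial K) (p : GPath G),
      Φ f (PA.basis p)
        = ∑ k ∈ f.support, f.coeff k • PA.basis (pf p.src (p.length + k * n)) := by
    intro f p
    conv_lhs => rw [← Polynomial.sum_monomial_eq f]
    rw [Polynomial.sum, map_sum, LinearMap.sum_apply]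
    apply Finset.sum_congr rfl
    intro k hk
    rw [hΦ_mono, LinearMap.smul_apply, hS_basis]
  have hΦ_coeff : ∀ (f : Polynomial K) (p : GPath G) (k₀ : ℕ),
      PA.basis.repr (Φ f (PA.basis p)) (pf p.src (p.length + k₀ * n)) = f.coeff k₀ := by
    intro f p k₀
    rw [hΦ_apply, map_sum, Finsupp.finset_sum_apply]
    rw [Finset.sum_eq_single k₀]
    · rw [map_smul, Basis.repr_self]
      simp
    · intro k hk hne
      rw [map_smul, Basis.repr_self, Finsupp.smul_single]
      apply Finsupp.single_eq_of_ne'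
      intro hcon
      apply hne
      have h2 := hpf_inj _ _ _ hcon
      have h3 : k * n = k₀ * n := by omega
      exact Nat.eq_of_mul_eq_mul_right hn h3
    · intro hk
      rw [Polynomial.notMem_support_iff.mp hk]
      simp
  set u₀ : G.V := φV.symm ⟨0, hn⟩ with hu₀def
  have hΦ_inj : Function.Injective Φ := by
    have hker : ∀ f : Polynomial K, Φ f = 0 → f = 0 := by
      intro f hf
      ext k
      rw [Polynomial.coeff_zero, ← hΦ_coeff f (ofVertex u₀) k, hf]
      simp
    intro f g hfg
    have := hker (f - g) (by rw [map_sub, hfg, sub_self])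
    exact sub_eq_zero.mp this
  have hΦ_cent : ∀ f : Polynomial K, Φ f ∈ centroidSet K A := by
    intro f
    induction f using Polynomial.induction_on' with
    | add p q hp hq =>
      intro x y
      rw [map_add]
      constructor
      · rw [LinearMap.add_apply, LinearMap.add_apply, (hp x y).1, (hq x y).1, add_mul]
      · rw [LinearMap.add_apply, LinearMap.add_apply, (hp x y).2, (hq x y).2, mul_add]
    | monomial a c =>
      intro x y
      rw [hΦ_mono]
      constructor
      · rw [LinearMap.smul_apply, LinearMap.smul_apply, hSmul1 a x y, smul_mul_assoc]
      · rw [LinearMap.smul_apply, LinearMap.smul_apply, hSmul2 a x y, mul_smul_comm]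
  have hsurjΦ : ∀ T ∈ centroidSet K A, ∃ f : Polynomial K, Φ f = T := by
    intro T hT
    have hclosed_form : ∀ (u : G.V) (q : GPath G),
        PA.basis.repr (T (PA.basis (ofVertex u))) q ≠ 0 → ∃ k : ℕ, q = pf u (k * n) := by
      intro u q hne
      obtain ⟨h1, h2⟩ := PA.supp_closed hT u q hne
      have hq : q = pf u q.length := by rw [← h1]; exact hpf_uniq q
      have h3 : σ^[q.length] u = u := by
        conv_lhs => rw [← h1, ← hrng q]
        rw [h2]
      have h4 : ((φV u : ℕ) + q.length) % n = (φV u : ℕ) := by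
        have h5 := hφiter q.length u
        rw [h3] at h5
        exact (congrArg Fin.val h5).symm
      have h6 : q.length % n = 0 := by
        have ha : (φV u : ℕ) < n := (φV u).2
        have hb : q.length % n < n := Nat.mod_lt _ hn
        have hc2 : ((φV u : ℕ) + q.length % n) % n = (φV u : ℕ) := by
          have h7 := Nat.add_mod (φV u : ℕ) q.length n
          rw [h4, Nat.mod_eq_of_lt ha] at h7
          exact h7.symm
        by_cases hlt : (φV u : ℕ) + q.length % n < n
        · rw [Nat.mod_eq_of_lt hlt] at hc2; omega
        · have h8 : ((φV u : ℕ) + q.length % n) % n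
              = (φV u : ℕ) + q.length % n - n := by
            rw [Nat.mod_eq_sub_mod (by omega), Nat.mod_eq_of_lt (by omega)]
          omega
      refine ⟨q.length / n, ?_⟩
      have h10 : q.length / n * n = q.length := by
        have h9 := Nat.div_add_mod q.length n
        rw [Nat.mul_comm (q.length / n) n]
        omega
      rw [h10]
      exact hq
    have hstep : ∀ (v : G.V) (k : ℕ),
        PA.basis.repr (T (PA.basis (ofVertex v))) (pf v (k * n))
          = PA.basis.repr (T (PA.basis (ofVertex (σ v)))) (pf (σ v) (k * n)) := by
      intro v k
      have hrel := PA.edge_rel hT (nxt v)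
      rw [hs' v, hr' v] at hrel
      have hx1 : ∀ c : GPath G, PA.basis.repr (T (PA.basis (ofVertex v))) c ≠ 0 →
          c.rng = (ofEdge (nxt v)).src := by
        intro c hcne
        rw [src_ofEdge, hs' v]
        exact (PA.supp_closed hT v c hcne).2
      have h₀ : (pf v (k * n)).rng = (ofEdge (nxt v)).src := by
        rw [src_ofEdge, hs' v, hpf_rng, hσkn]
      have hval1 := PA.repr_mul_right_eq (T (PA.basis (ofVertex v))) (ofEdge (nxt v))
        (pf v (k * n)) h₀ hx1
      have hx2 : ∀ c : GPath G, PA.basis.repr (T (PA.basis (ofVertex (σ v)))) c ≠ 0 →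
          (ofEdge (nxt v)).rng = c.src := by
        intro c hcne
        rw [rng_ofEdge, hr' v]
        exact ((PA.supp_closed hT (σ v) c hcne).1).symm
      have h₁ : (ofEdge (nxt v)).rng = (pf (σ v) (k * n)).src := by
        rw [rng_ofEdge, hr' v, hpf_src]
      have hval2 := PA.repr_mul_left_eq (T (PA.basis (ofVertex (σ v)))) (ofEdge (nxt v))
        (pf (σ v) (k * n)) h₁ hx2
      rw [hrel] at hval1
      rw [← hval1, ← hval2]
      congr 1
      calc (pf v (k * n)).comp (ofEdge (nxt v)) h₀
          = pf v (k * n + 1) := by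
            rw [hpf_uniq ((pf v (k * n)).comp (ofEdge (nxt v)) h₀)]
            apply pf_ext
            · rw [src_comp, hpf_src]
            · rw [length_comp, hpf_len, length_ofEdge]
        _ = (ofEdge (nxt v)).comp (pf (σ v) (k * n)) h₁ := by
            rw [hpf_uniq ((ofEdge (nxt v)).comp (pf (σ v) (k * n)) h₁)]
            apply pf_ext
            · rw [src_comp, src_ofEdge, hs' v]
            · rw [length_comp, hpf_len, length_ofEdge]; omega
    have hu₀ : φV u₀ = ⟨0, hn⟩ := φV.apply_symm_apply _
    have hiter_all : ∀ (j k : ℕ),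
        PA.basis.repr (T (PA.basis (ofVertex (σ^[j] u₀)))) (pf (σ^[j] u₀) (k * n))
          = PA.basis.repr (T (PA.basis (ofVertex u₀))) (pf u₀ (k * n)) := by
      intro j
      induction j with
      | zero => intro k; rfl
      | succ i ih =>
        intro k
        rw [Function.iterate_succ_apply', ← hstep (σ^[i] u₀) k]
        exact ih k
    have hall : ∀ (v : G.V) (k : ℕ),
        PA.basis.repr (T (PA.basis (ofVertex v))) (pf v (k * n))
          = PA.basis.repr (T (PA.basis (ofVertex u₀))) (pf u₀ (k * n)) := by
      intro v k
      have hj : ∃ j : ℕ, σ^[j] u₀ = v := by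
        refine ⟨(φV v : ℕ), ?_⟩
        apply φV.injective
        rw [hφiter]
        apply Fin.ext
        show ((φV u₀ : ℕ) + (φV v : ℕ)) % n = (φV v : ℕ)
        rw [hu₀]
        show (0 + (φV v : ℕ)) % n = (φV v : ℕ)
        rw [Nat.zero_add]
        exact Nat.mod_eq_of_lt (φV v).2
      obtain ⟨j, rfl⟩ := hj
      exact hiter_all j k
    have hinjpf : Function.Injective (fun k : ℕ => pf u₀ (k * n)) := by
      intro k1 k2 h
      exact hkn_inj u₀ k1 k2 h
    set gcoef : ℕ →₀ K := Finsupp.comapDomain (fun k : ℕ => pf u₀ (k * n))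
        (PA.basis.repr (T (PA.basis (ofVertex u₀)))) (hinjpf.injOn) with hgdef
    set f : Polynomial K := Polynomial.ofFinsupp (AddMonoidAlgebra.ofCoeff gcoef) with hfdef
    have hfcoeff : ∀ k : ℕ,
        f.coeff k = PA.basis.repr (T (PA.basis (ofVertex u₀))) (pf u₀ (k * n)) := by
      intro k
      rw [hfdef]
      have h1 : (Polynomial.ofFinsupp (AddMonoidAlgebra.ofCoeff gcoef)).coeff k = gcoef k := by
        rw [Polynomial.coeff_ofFinsupp]
      rw [h1, hgdef]
      rfl
    refine ⟨f, ?_⟩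
    have hvert : ∀ u : G.V, Φ f (PA.basis (ofVertex u)) = T (PA.basis (ofVertex u)) := by
      intro u
      apply PA.basis.repr.injective
      ext q
      by_cases hq : ∃ k : ℕ, q = pf u (k * n)
      · obtain ⟨k, rfl⟩ := hq
        have h7 := hΦ_coeff f (ofVertex u) k
        have h8 : pf (GPath.src (ofVertex u : GPath G))
            (GPath.length (ofVertex u : GPath G) + k * n) = pf u (k * n) :=
          pf_ext _ _ _ _ (src_ofVertex u) (by rw [length_ofVertex]; omega)
        rw [h8] at h7
        rw [h7, hfcoeff k]
        exact (hall u k).symm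
      · have hR : PA.basis.repr (T (PA.basis (ofVertex u))) q = 0 := by
          by_contra hne
          exact hq (hclosed_form u q hne)
        rw [hR, hΦ_apply, map_sum, Finsupp.finset_sum_apply]
        apply Finset.sum_eq_zero
        intro k hk
        rw [map_smul, Basis.repr_self, Finsupp.smul_single]
        apply Finsupp.single_eq_of_ne'
        intro hcon
        apply hq
        refine ⟨k, ?_⟩
        rw [← hcon]
        exact (pf_ext _ _ _ _ (src_ofVertex u) (by rw [length_ofVertex]; omega)).symm
    apply PA.basis.ext
    intro p
    rw [PA.T_basis hT p, ← hvert p.src]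
    have h9 := (hΦ_cent f (PA.basis (ofVertex p.src)) (PA.basis p)).1
    rw [← h9, PA.vertex_mul p]
  refine ⟨Φ, hΦ_inj, hΦ_mul, hΦ_one, ?_⟩
  apply Set.eq_of_subset_of_subset
  · rintro T' ⟨f, rfl⟩
    exact hΦ_cent f
  · intro T' hT'
    obtain ⟨f, hf⟩ := hsurjΦ T' hT'
    exact ⟨f, hf⟩

end PathAlgebraOn

/-- for a connected graph `E`, the centroid of `KE` is `K[x]` if `E` is a
cycle, and `K·Id` otherwise. -/
theorem stmt6 (K : Type) [Field K] (G : DGraph)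
    (A : Type) [NonUnitalRing A] [Module K A] [SMulCommClass K A A] [IsScalarTower K A A]
    (PA : PathAlgebraOn K G A) (hconn : G.Connected) :
    (G.IsCycleGraph →
      ∃ Φ : Polynomial K →ₗ[K] (A →ₗ[K] A),
        Function.Injective Φ ∧
        (∀ p q : Polynomial K, Φ (p * q) = Φ p ∘ₗ Φ q) ∧
        Φ 1 = LinearMap.id ∧
        Set.range Φ = centroidSet K A) ∧
    (¬ G.IsCycleGraph →
      ∀ T ∈ centroidSet K A, ∃ k : K, T = k • (LinearMap.id : A →ₗ[K] A)) := by
  constructor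
  · intro hcyc
    exact PA.cycle_branch hcyc
  · intro hnc
    exact PA.noncycle_branch hconn hnc
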